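/- In the setting of the previous statement, y(θ) is strictly increasing in θ on [θ_min, θ_max]: if θ < θ', then y(θ) < y(θ'). -/

import Mathlib

open MeasureTheory Set

lemma aux_int (w : ℝ → ℝ) (hw_cont : ContinuousOn w (Icc 0 1)) (a : ℝ)
    (ha : a ∈ Icc (0:ℝ) 1) : IntegrableOn (fun x => w x - w a) (Icc a 1) := by
  have h1 : IntegrableOn w (Icc (0:ℝ) 1) := hw_cont.integrableOn_Icc
  have h2 : IntegrableOn w (Icc a 1) := h1.mono_set (Icc_subset_Icc ha.1 le_rfl)
  exact h2.sub (integrableOn_const (by simp [Real.volume_Icc]))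

lemma aux_key (w : ℝ → ℝ) (hw_cont : ContinuousOn w (Icc 0 1))
    (hw_mono : StrictMonoOn w (Icc 0 1)) (a b : ℝ)
    (ha : a ∈ Icc (0:ℝ) 1) (hb : b ∈ Icc (0:ℝ) 1) (hab : a ≤ b) :
    ∫ x in Icc b 1, (w x - w b) ≤ ∫ x in Icc a 1, (w x - w a) := by
  have hmono := hw_mono.monotoneOn
  have hwa : w a ≤ w b := hmono ha hb hab
  have hia := aux_int w hw_cont a ha
  have hib : IntegrableOn (fun x => w x - w a) (Icc b 1) :=
    (aux_int w hw_cont a ha).mono_set (Icc_subset_Icc hab le_rfl)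
  have step1 : ∫ x in Icc b 1, (w x - w b) ≤ ∫ x in Icc b 1, (w x - w a) := by
    apply setIntegral_mono_on ((aux_int w hw_cont b hb)) hib measurableSet_Icc
    intro x hx; linarith
  have step2 : ∫ x in Icc b 1, (w x - w a) ≤ ∫ x in Icc a 1, (w x - w a) := by
    apply setIntegral_mono_set hia
    · filter_upwards [ae_restrict_mem measurableSet_Icc] with x hx
      have : w a ≤ w x := hmono ha ⟨le_trans ha.1 hx.1, hx.2⟩ hx.1
      simpa using this
    · exact HasSubset.Subset.eventuallyLE (Icc_subset_Icc hab le_rfl)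
  linarith

lemma aux_pos (w : ℝ → ℝ) (hw_cont : ContinuousOn w (Icc 0 1))
    (hw_mono : StrictMonoOn w (Icc 0 1)) (a : ℝ)
    (ha : a ∈ Ico (0:ℝ) 1) :
    0 < ∫ x in Icc a 1, (w x - w a) := by
  set m := (a + 1) / 2 with hm
  have ham : a < m := by simp [hm]; linarith [ha.2]
  have hm1 : m < 1 := by simp [hm]; linarith [ha.2]
  have haI : a ∈ Icc (0:ℝ) 1 := ⟨ha.1, le_of_lt ha.2⟩
  have hmI : m ∈ Icc (0:ℝ) 1 := ⟨by linarith [ha.1], le_of_lt hm1⟩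
  have hwam : w a < w m := hw_mono haI hmI ham
  have hia := aux_int w hw_cont a haI
  have hib : IntegrableOn (fun x => w x - w a) (Icc m 1) :=
    hia.mono_set (Icc_subset_Icc (le_of_lt ham) le_rfl)
  have step2 : ∫ x in Icc m 1, (w x - w a) ≤ ∫ x in Icc a 1, (w x - w a) := by
    apply setIntegral_mono_set hia
    · filter_upwards [ae_restrict_mem measurableSet_Icc] with x hx
      have : w a ≤ w x := hw_mono.monotoneOn haI ⟨le_trans haI.1 hx.1, hx.2⟩ hx.1
      simpa using this
    · exact HasSubset.Subset.eventuallyLE (Icc_subset_Icc (le_of_lt ham) le_rfl)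
  have step1 : ∫ x in Icc m 1, (fun _ => w m - w a) x ≤ ∫ x in Icc m 1, (w x - w a) := by
    apply setIntegral_mono_on (integrableOn_const (by simp [Real.volume_Icc])) hib measurableSet_Icc
    intro x hx
    have : w m ≤ w x := hw_mono.monotoneOn hmI ⟨le_trans hmI.1 hx.1, hx.2⟩ hx.1
    linarith
  have hconst : ∫ x in Icc m 1, (fun _ => w m - w a) x = (1 - m) * (w m - w a) := by
    rw [setIntegral_const]
    simp [Real.volume_Icc, ENNReal.toReal_ofReal (by linarith : (0:ℝ) ≤ 1 - m), smul_eq_mul]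
    exact Or.inl (le_of_lt hm1)
  have : 0 < (1 - m) * (w m - w a) := by
    apply mul_pos <;> linarith
  linarith

lemma aux_eq (w : ℝ → ℝ) (hw_cont : ContinuousOn w (Icc 0 1)) (θ y : ℝ)
    (hθ : 0 < θ) (hyI : y ∈ Ioo (0:ℝ) 1)
    (heq : (θ * ∫ x in Icc y 1, w x) / (1 + θ * (1 - y)) = w y) :
    θ * ∫ x in Icc y 1, (w x - w y) = w y := by
  have hyc : y ∈ Icc (0:ℝ) 1 := ⟨le_of_lt hyI.1, le_of_lt hyI.2⟩
  have hd : (0:ℝ) < 1 + θ * (1 - y) := by nlinarith [hyI.2]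
  have h1 : θ * ∫ x in Icc y 1, w x = w y * (1 + θ * (1 - y)) :=
    (div_eq_iff (ne_of_gt hd)).mp heq
  have hiw : IntegrableOn w (Icc y 1) :=
    hw_cont.integrableOn_Icc.mono_set (Icc_subset_Icc hyc.1 le_rfl)
  have hsplit : ∫ x in Icc y 1, (w x - w y) = (∫ x in Icc y 1, w x) - (1 - y) * w y := by
    rw [integral_sub hiw (integrableOn_const (by simp [Real.volume_Icc]))]
    rw [setIntegral_const]
    simp [Real.volume_Icc, ENNReal.toReal_ofReal (by linarith [hyI.2] : (0:ℝ) ≤ 1 - y), smul_eq_mul]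
    exact Or.inl (le_of_lt hyI.2)
  rw [hsplit]; nlinarith [h1]

theorem stmt7 (w : ℝ → ℝ) (θmin θmax : ℝ)
    (hθmin_pos : 0 < θmin) (hθlt : θmin < θmax)
    (hw_cont : ContinuousOn w (Icc 0 1))
    (hw_mono : StrictMonoOn w (Icc 0 1))
    (hw_range : ∀ x ∈ Icc (0:ℝ) 1, w x ∈ Icc (0:ℝ) 1)
    (hθmin : w 0 / (∫ x in Icc (0:ℝ) 1, (w x - w 0)) < θmin)
    (yfun : ℝ → ℝ)
    (hy : ∀ θ ∈ Icc θmin θmax, yfun θ ∈ Ioo (0:ℝ) 1 ∧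
      (θ * ∫ x in Icc (yfun θ) 1, w x) / (1 + θ * (1 - yfun θ)) = w (yfun θ)) :
    StrictMonoOn yfun (Icc θmin θmax) := by
  intro θ hθ θ' hθ' hlt
  obtain ⟨hyI, heq⟩ := hy θ hθ
  obtain ⟨hyI', heq'⟩ := hy θ' hθ'
  set y := yfun θ
  set y' := yfun θ'
  have hθpos : 0 < θ := lt_of_lt_of_le hθmin_pos hθ.1
  have hθpos' : 0 < θ' := lt_of_lt_of_le hθmin_pos hθ'.1
  have e1 : θ * ∫ x in Icc y 1, (w x - w y) = w y := aux_eq w hw_cont θ y hθpos hyI heq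
  have e2 : θ' * ∫ x in Icc y' 1, (w x - w y') = w y' := aux_eq w hw_cont θ' y' hθpos' hyI' heq'
  have hJpos : 0 < ∫ x in Icc y 1, (w x - w y) :=
    aux_pos w hw_cont hw_mono y ⟨le_of_lt hyI.1, hyI.2⟩
  by_contra hcon
  push_neg at hcon
  have hkey : ∫ x in Icc y 1, (w x - w y) ≤ ∫ x in Icc y' 1, (w x - w y') :=
    aux_key w hw_cont hw_mono y' y ⟨le_of_lt hyI'.1, le_of_lt hyI'.2⟩
      ⟨le_of_lt hyI.1, le_of_lt hyI.2⟩ hcon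
  have hw' : w y' ≤ w y := hw_mono.monotoneOn ⟨le_of_lt hyI'.1, le_of_lt hyI'.2⟩
      ⟨le_of_lt hyI.1, le_of_lt hyI.2⟩ hcon
  nlinarith [hJpos, hkey]
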